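/- No infinite compact Hausdorff almost P-space satisfies the countable chain condition; that is, every infinite compact Hausdorff space in which every nonempty Gδ subset has nonempty interior admits an uncountable family of pairwise disjoint nonempty open subsets. -/

import Mathlib

open Set

private lemma isGδ_preimage_zero' {K : Type*} [TopologicalSpace K] {f : K → ℝ}
    (hf : Continuous f) : IsGδ (f ⁻¹' {0}) := by
  obtain ⟨T, hT, hTc, h0⟩ := IsGδ.singleton (0 : ℝ)
  rw [h0, Set.preimage_sInter]
  exact IsGδ.biInter hTc fun t ht => ((hT t ht).preimage hf).isGδ

/-- In a compact Hausdorff (hence normal) space, any point of an open set admits a closed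
Gδ set containing it inside the open set. -/
private lemma exists_closed_gdelta' {K : Type*} [TopologicalSpace K] [CompactSpace K]
    [T2Space K] {U : Set K} (hU : IsOpen U) {x : K} (hx : x ∈ U) :
    ∃ G : Set K, IsClosed G ∧ IsGδ G ∧ x ∈ G ∧ G ⊆ U := by
  obtain ⟨f, hf0, hf1, -⟩ := exists_continuous_zero_one_of_isClosed
    (isClosed_singleton (x := x)) hU.isClosed_compl
    (Set.disjoint_singleton_left.2 (by simpa using hx))
  refine ⟨f ⁻¹' {0}, isClosed_singleton.preimage f.continuous,
    isGδ_preimage_zero' f.continuous, hf0 rfl, fun z hz => ?_⟩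
  by_contra h
  have h1 : f z = 1 := hf1 h
  have h0 : f z = 0 := hz
  norm_num [h0] at h1

private lemma not_countable_funBool : ¬ Countable (ℕ → Bool) := by
  intro h
  have hset : Countable (Set ℕ) :=
    Countable.of_equiv (ℕ → Bool)
      (Equiv.arrowCongr (Equiv.refl ℕ) Equiv.propEquivBool.symm)
  obtain ⟨f, hf⟩ := exists_injective_nat (Set ℕ)
  exact Function.cantor_injective f hf

/-- No infinite compact Hausdorff almost P-space satisfies the countable chain condition:
every infinite compact Hausdorff space in which every nonempty Gδ set has nonempty interior
admits an uncountable pairwise disjoint family of nonempty open sets. -/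
theorem not_ccc_of_infinite_compact_almostPSpace
    (K : Type*) [TopologicalSpace K] [CompactSpace K] [T2Space K] [Infinite K]
    (hP : ∀ G : Set K, IsGδ G → G.Nonempty → (interior G).Nonempty) :
    ∃ 𝒰 : Set (Set K), (∀ U ∈ 𝒰, IsOpen U ∧ U.Nonempty) ∧
      (∀ U ∈ 𝒰, ∀ V ∈ 𝒰, U ≠ V → Disjoint U V) ∧ ¬ 𝒰.Countable := by
  classical
  set I : Set K := {x : K | IsOpen ({x} : Set K)} with hIdef
  by_cases hI : I.Countable
  · -- Main case: countably many isolated points.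
    have hD : IsGδ Iᶜ := hI.isGδ_compl
    have hDne : (Iᶜ : Set K).Nonempty := by
      rw [Set.nonempty_compl]
      intro h
      have hall : ∀ a : K, IsOpen ({a} : Set K) := by
        intro a
        have ha : a ∈ I := by rw [h]; trivial
        exact ha
      have : DiscreteTopology K := discreteTopology_iff_isOpen_singleton.2 hall
      exact Infinite.not_finite (finite_of_compact_of_discrete (X := K))
    set V : Set K := interior (Iᶜ : Set K) with hVdef
    have hVopen : IsOpen V := isOpen_interior
    obtain ⟨v, hv⟩ := hP _ hD hDne
    -- any nonempty open subset of V has two points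
    have htwo : ∀ U : Set K, IsOpen U → U ⊆ V → ∀ x ∈ U, ∃ y ∈ U, y ≠ x := by
      intro U hU hUV x hx
      by_contra h
      push_neg at h
      have hUx : U = {x} := Set.Subset.antisymm (fun y hy => h y hy) (by simpa using hx)
      have hxI : x ∈ I := by rw [hIdef]; exact Set.mem_setOf.2 (hUx ▸ hU)
      exact (interior_subset (hUV hx)) hxI
    -- the invariant
    let P : Set K → Prop := fun F => IsClosed F ∧ IsGδ F ∧ F.Nonempty ∧ F ⊆ V
    -- splitting lemma
    have split : ∀ F : {F : Set K // P F},
        ∃ p : {F : Set K // P F} × {F : Set K // P F},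
          p.1.1 ⊆ F.1 ∧ p.2.1 ⊆ F.1 ∧ Disjoint p.1.1 p.2.1 := by
      rintro ⟨F, hFc, hFg, hFne, hFV⟩
      obtain ⟨x, hx⟩ := hP F hFg hFne
      have hintV : interior F ⊆ V := interior_subset.trans hFV
      obtain ⟨y, hy, hyx⟩ := htwo (interior F) isOpen_interior hintV x hx
      obtain ⟨W₀, W₁, hW₀, hW₁, hxW, hyW, hdW⟩ := t2_separation hyx.symm
      obtain ⟨G₀, hG₀c, hG₀g, hxG₀, hG₀sub⟩ :=
        exists_closed_gdelta' (hW₀.inter isOpen_interior) (⟨hxW, hx⟩ : x ∈ W₀ ∩ interior F)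
      obtain ⟨G₁, hG₁c, hG₁g, hyG₁, hG₁sub⟩ :=
        exists_closed_gdelta' (hW₁.inter isOpen_interior) (⟨hyW, hy⟩ : y ∈ W₁ ∩ interior F)
      refine ⟨⟨⟨G₀, hG₀c, hG₀g, ⟨x, hxG₀⟩,
          (hG₀sub.trans Set.inter_subset_right).trans hintV⟩,
        ⟨G₁, hG₁c, hG₁g, ⟨y, hyG₁⟩,
          (hG₁sub.trans Set.inter_subset_right).trans hintV⟩⟩,
        (hG₀sub.trans Set.inter_subset_right).trans interior_subset,
        (hG₁sub.trans Set.inter_subset_right).trans interior_subset,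
        hdW.mono (hG₀sub.trans Set.inter_subset_left) (hG₁sub.trans Set.inter_subset_left)⟩
    choose ch hch₀ hch₁ hchd using split
    -- root
    obtain ⟨G, hGc, hGg, hvG, hGV⟩ := exists_closed_gdelta' hVopen hv
    have hroot : P G := ⟨hGc, hGg, ⟨v, hvG⟩, hGV⟩
    -- the tree
    let T : List Bool → {F : Set K // P F} :=
      fun l => l.foldr (fun b F => if b then (ch F).2 else (ch F).1) ⟨G, hroot⟩
    have hTcons : ∀ (b : Bool) (l : List Bool), (T (b :: l)).1 ⊆ (T l).1 := by
      intro b l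
      cases b
      · exact hch₀ (T l)
      · exact hch₁ (T l)
    have hTdisj : ∀ (l : List Bool), Disjoint (T (false :: l)).1 (T (true :: l)).1 :=
      fun l => hchd (T l)
    -- branches
    let L : (ℕ → Bool) → ℕ → List Bool := fun x n => Nat.rec [] (fun m l => x m :: l) n
    have hL0 : ∀ x, L x 0 = [] := fun _ => rfl
    have hLs : ∀ x n, L x (n + 1) = x n :: L x n := fun _ _ => rfl
    let B : (ℕ → Bool) → Set K := fun x => ⋂ n, (T (L x n)).1
    have hchain : ∀ x n, (T (L x (n + 1))).1 ⊆ (T (L x n)).1 := by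
      intro x n; rw [hLs]; exact hTcons _ _
    have hBgδ : ∀ x, IsGδ (B x) := fun x => IsGδ.iInter fun n => (T (L x n)).2.2.1
    have hBne : ∀ x, (B x).Nonempty := by
      intro x
      exact IsCompact.nonempty_iInter_of_sequence_nonempty_isCompact_isClosed
        (fun n => (T (L x n)).1) (hchain x) (fun n => (T (L x n)).2.2.2.1)
        ((T (L x 0)).2.1.isCompact) (fun n => (T (L x n)).2.1)
    have hBsub : ∀ x n, B x ⊆ (T (L x n)).1 := fun x n => Set.iInter_subset _ n
    -- branch disjointness
    have hBdisj : ∀ x y : ℕ → Bool, x ≠ y → Disjoint (B x) (B y) := by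
      intro x y hxy
      have hex : ∃ n, x n ≠ y n := by
        by_contra h
        push_neg at h
        exact hxy (funext h)
      classical
      let n := Nat.find hex
      have hn : x n ≠ y n := Nat.find_spec hex
      have hmin : ∀ m < n, x m = y m := fun m hm => by
        by_contra h
        exact Nat.find_min hex hm h
      have hLeq : L x n = L y n := by
        have : ∀ k ≤ n, L x k = L y k := by
          intro k hk
          induction k with
          | zero => rfl
          | succ m ih =>
            rw [hLs, hLs, ih (Nat.le_of_succ_le hk), hmin m (Nat.lt_of_succ_le hk)]
        exact this n le_rfl
      have hx1 : B x ⊆ (T (x n :: L x n)).1 := by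
        have := hBsub x (n + 1); rwa [hLs] at this
      have hy1 : B y ⊆ (T (y n :: L x n)).1 := by
        have := hBsub y (n + 1); rw [hLs, hLeq] at *; exact this
      cases hxb : x n with
      | false =>
        have hyb : y n = true := by
          cases hyb : y n
          · exact absurd (hxb.trans hyb.symm) hn
          · rfl
        rw [hxb] at hx1; rw [hyb] at hy1
        exact (hTdisj (L x n)).mono hx1 hy1
      | true =>
        have hyb : y n = false := by
          cases hyb : y n
          · rfl
          · exact absurd (hxb.trans hyb.symm) hn
        rw [hxb] at hx1; rw [hyb] at hy1
        exact ((hTdisj (L x n)).symm).mono hx1 hy1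
    -- the family
    let O : (ℕ → Bool) → Set K := fun x => interior (B x)
    have hOne : ∀ x, (O x).Nonempty := fun x => hP _ (hBgδ x) (hBne x)
    have hOdisj : ∀ x y, x ≠ y → Disjoint (O x) (O y) := fun x y h =>
      (hBdisj x y h).mono interior_subset interior_subset
    have hOinj : Function.Injective O := by
      intro x y h
      by_contra hxy
      have := (hOdisj x y hxy)
      rw [h] at this
      obtain ⟨z, hz⟩ := hOne y
      exact Set.disjoint_left.1 this hz hz
    refine ⟨Set.range O, ?_, ?_, ?_⟩
    · rintro U ⟨x, rfl⟩; exact ⟨isOpen_interior, hOne x⟩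
    · rintro U ⟨x, rfl⟩ W ⟨y, rfl⟩ hne
      exact hOdisj x y (fun h => hne (by rw [h]))
    · intro hc
      have := hc.to_subtype
      have hcnt : Countable (ℕ → Bool) :=
        Countable.of_equiv _ (Equiv.ofInjective O hOinj).symm
      exact not_countable_funBool hcnt
  · -- Uncountably many isolated points.
    refine ⟨(fun x => ({x} : Set K)) '' I, ?_, ?_, ?_⟩
    · rintro U ⟨x, hx, rfl⟩; exact ⟨hx, Set.singleton_nonempty x⟩
    · rintro U ⟨x, hx, rfl⟩ W ⟨y, hy, rfl⟩ hne
      exact Set.disjoint_singleton.2 fun h => hne (by rw [h])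
    · intro hc
      have hpre : ((fun x => ({x} : Set K)) ⁻¹' ((fun x => ({x} : Set K)) '' I)).Countable :=
        hc.preimage_of_injOn (fun a _ b _ h => Set.singleton_eq_singleton_iff.1 h)
      exact hI (hpre.mono (Set.subset_preimage_image _ _))
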